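/- For every s ≥ 1, the s-order sawtooth function g_s: [0,1] → [0,1] can be realized by a ReLU neural network Φ: ℝ → ℝ with connectivity M(Φ) = 11s − 3 and depth L(Φ) = s + 1, i.e., Φ(x) = g_s(x) for all x ∈ [0,1]. -/

import Mathlib

open MeasureTheory Matrix

/-- The sawtooth function `g`: `g x = 2 x` for `0 ≤ x < 1/2`, `g x = 2 (1 - x)` for
`1/2 ≤ x ≤ 1`, and `g x = 0` outside `[0, 1]`. -/
noncomputable def saw (x : ℝ) : ℝ :=
  if x < 0 then 0 else if x < 1/2 then 2 * x else if x ≤ 1 then 2 * (1 - x) else 0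

/-- `sawIter s` is the `s`-fold composition `g_s = g ∘ g ∘ ⋯ ∘ g` of the sawtooth function
(with `sawIter 0 = id`, `sawIter 1 = g`). -/
noncomputable def sawIter : ℕ → ℝ → ℝ
  | 0, x => x
  | s + 1, x => saw (sawIter s x)

/-- A ReLU neural network with input dimension `din` and output dimension `dout`:
affine maps `W_ℓ x = A_ℓ x + b_ℓ` for layers `ℓ = 1, …, depth` (stored here with indices
`0, …, depth - 1`), with layer widths `width 0 = din, …, width depth = dout`. -/
structure ReLUNet (din dout : ℕ) where
  depth : ℕ
  depth_ge : 2 ≤ depth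
  width : ℕ → ℕ
  width_in : width 0 = din
  width_out : width depth = dout
  A : (ℓ : ℕ) → Matrix (Fin (width (ℓ + 1))) (Fin (width ℓ)) ℝ
  b : (ℓ : ℕ) → Fin (width (ℓ + 1)) → ℝ

namespace ReLUNet

variable {din dout : ℕ}

/-- The affine map of layer `ℓ`. -/
noncomputable def layer (Φ : ReLUNet din dout) (ℓ : ℕ) (x : Fin (Φ.width ℓ) → ℝ) :
    Fin (Φ.width (ℓ + 1)) → ℝ :=
  Φ.A ℓ *ᵥ x + Φ.b ℓ

/-- The output of the first `k` layers, with the ReLU activation applied after each layer. -/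
noncomputable def hidden (Φ : ReLUNet din dout) :
    (k : ℕ) → (Fin (Φ.width 0) → ℝ) → Fin (Φ.width k) → ℝ
  | 0, x => x
  | k + 1, x => fun i => max ((Φ.layer k (Φ.hidden k x)) i) 0

/-- The map `ℝ^din → ℝ^dout` realized by the network:
`Φ(x) = W_depth (ρ (W_{depth-1} (ρ (⋯ ρ (W_1 x)))))`, i.e. affine layers interleaved with
the ReLU activation `ρ`, with no activation after the last layer. -/
noncomputable def eval (Φ : ReLUNet din dout) (x : Fin din → ℝ) : Fin dout → ℝ := fun j =>
  Φ.layer (Φ.depth - 1) (Φ.hidden (Φ.depth - 1) (fun i => x (Fin.cast Φ.width_in i)))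
    (Fin.cast (show dout = Φ.width (Φ.depth - 1 + 1) by
      rw [Nat.sub_add_cancel (le_trans one_le_two Φ.depth_ge), Φ.width_out]) j)

open scoped Classical in
/-- The connectivity of the network: the total number of nonzero entries in the
weight matrices `A_ℓ` and bias vectors `b_ℓ`. -/
noncomputable def conn (Φ : ReLUNet din dout) : ℕ :=
  ∑ ℓ ∈ Finset.range Φ.depth,
    (((Finset.univ : Finset (Fin (Φ.width (ℓ+1)) × Fin (Φ.width ℓ))).filter
        (fun p => Φ.A ℓ p.1 p.2 ≠ 0)).card
      + ((Finset.univ : Finset (Fin (Φ.width (ℓ+1)))).filter (fun i => Φ.b ℓ i ≠ 0)).card)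

end ReLUNet


/-- Bias offsets `(0, 1/2, 1)` for the three hidden neurons. -/
noncomputable def cv (n : ℕ) : ℝ := if n = 1 then 1/2 else if n = 2 then 1 else 0

/-- Weight entries of the network. -/
noncomputable def aE (ℓ _i j : ℕ) : ℝ := if ℓ = 0 then 1 else if j = 1 then -4 else 2

/-- Bias entries of the network. -/
noncomputable def bE (s ℓ i : ℕ) : ℝ := if ℓ < s then -(cv i) else 0

/-- Widths of the network. -/
def nwW (s k : ℕ) : ℕ := if k = 0 then 1 else if k ≤ s then 3 else 1

lemma nwW_eq_three (s k : ℕ) (h1 : 1 ≤ k) (h2 : k ≤ s) : nwW s k = 3 := by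
  simp [nwW, h2]; omega

/-- The sawtooth network. -/
noncomputable def nw (s : ℕ) (hs : 1 ≤ s) : ReLUNet 1 1 where
  depth := s + 1
  depth_ge := by omega
  width := nwW s
  width_in := rfl
  width_out := by simp [nwW]
  A := fun ℓ => Matrix.of fun i j => aE ℓ i.val j.val
  b := fun ℓ i => bE s ℓ i.val

lemma nw_layer (s : ℕ) (hs : 1 ≤ s) (ℓ : ℕ) (v : Fin (nwW s ℓ) → ℝ)
    (i : Fin (nwW s (ℓ + 1))) :
    (nw s hs).layer ℓ v i = (∑ j : Fin (nwW s ℓ), aE ℓ i.val j.val * v j) + bE s ℓ i.val := by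
  simp [ReLUNet.layer, nw, Matrix.mulVec, dotProduct]
  rfl

lemma key_saw {y : ℝ} (h0 : 0 ≤ y) (h1 : y ≤ 1) :
    2 * max y 0 + (-4) * max (y - 1/2) 0 + 2 * max (y - 1) 0 = saw y := by
  unfold saw
  rcases lt_or_ge y (1/2) with h | h
  · rw [if_neg (not_lt.2 h0), if_pos h,
      max_eq_left h0, max_eq_right (by linarith), max_eq_right (by linarith)]
    ring
  · rw [if_neg (not_lt.2 h0), if_neg (not_lt.2 h), if_pos h1,
      max_eq_left h0, max_eq_left (by linarith), max_eq_right (by linarith)]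
    ring

lemma saw_mem {y : ℝ} (h : y ∈ Set.Icc (0:ℝ) 1) : saw y ∈ Set.Icc (0:ℝ) 1 := by
  obtain ⟨h0, h1⟩ := h
  unfold saw
  constructor <;> (split_ifs <;> linarith)

lemma sawIter_mem {x : ℝ} (h : x ∈ Set.Icc (0:ℝ) 1) (k : ℕ) :
    sawIter k x ∈ Set.Icc (0:ℝ) 1 := by
  induction k with
  | zero => exact h
  | succ k ih => exact saw_mem ih

lemma nw_hidden (s : ℕ) (hs : 1 ≤ s) (x : ℝ) (hx : x ∈ Set.Icc (0:ℝ) 1) :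
    ∀ k, 1 ≤ k → k ≤ s → ∀ i : Fin (nwW s k),
      (nw s hs).hidden k (fun _ => x) i = max (sawIter (k - 1) x - cv i.val) 0 := by
  intro k
  induction k with
  | zero => omega
  | succ k ih =>
    intro _ hks i
    have hstep : (nw s hs).hidden (k + 1) (fun _ => x) i
        = max ((nw s hs).layer k ((nw s hs).hidden k (fun _ => x)) i) 0 := rfl
    rw [hstep]; erw [nw_layer]
    rcases Nat.eq_zero_or_pos k with hk0 | hkpos
    · subst hk0
      have hsum : (∑ j : Fin (nwW s 0), aE 0 i.val j.val * (nw s hs).hidden 0 (fun _ => x) j)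
          = 1 * x := by
        have h1 : nwW s 0 = 1 := rfl
        have h0 : ∀ j : Fin (nwW s 0), (nw s hs).hidden 0 (fun _ => x) j = x := fun _ => rfl
        simp only [h0]
        rw [Fin.sum_univ_eq_sum_range (fun j => aE 0 i.val j * x) (nwW s 0)]
        rw [h1, Finset.sum_range_one]
        simp [aE]
      rw [hsum]
      have hb : bE s 0 i.val = -(cv i.val) := if_pos hs
      rw [hb]
      simp only [Nat.add_sub_cancel, sawIter]
      congr 1
      ring
    · have hy := sawIter_mem hx (k - 1)
      set y := sawIter (k - 1) x with hy_def
      have hsum : (∑ j : Fin (nwW s k), aE k i.val j.val * (nw s hs).hidden k (fun _ => x) j)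
          = ∑ j ∈ Finset.range (nwW s k), aE k i.val j * max (y - cv j) 0 := by
        rw [Finset.sum_congr rfl (fun j _ => by rw [ih hkpos (by omega) j])]
        exact Fin.sum_univ_eq_sum_range (fun j => aE k i.val j * max (y - cv j) 0) (nwW s k)
      rw [hsum, nwW_eq_three s k hkpos (by omega)]
      rw [Finset.sum_range_succ, Finset.sum_range_succ, Finset.sum_range_one]
      have hb : bE s k i.val = -(cv i.val) := if_pos (by omega)
      rw [hb]
      have hk : k ≠ 0 := by omega
      simp only [aE, cv, if_neg hk]
      norm_num
      have hkey := key_saw hy.1 hy.2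
      have hss : sawIter k x = saw y := by
        have hk1 : k = (k - 1) + 1 := by omega
        rw [hk1]
        rfl
      rw [hss]
      congr 1
      linarith [hkey]

lemma nw_eval (s : ℕ) (hs : 1 ≤ s) (x : ℝ) (hx : x ∈ Set.Icc (0:ℝ) 1) :
    (nw s hs).eval (fun _ => x) 0 = sawIter s x := by
  have key : ∀ i : Fin (nwW s (s + 1)),
      (nw s hs).layer s ((nw s hs).hidden s (fun _ => x)) i = sawIter s x := by
    intro i
    erw [nw_layer]
    have hy := sawIter_mem hx (s - 1)
    set y := sawIter (s - 1) x with hy_def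
    have hsum : (∑ j : Fin (nwW s s), aE s i.val j.val * (nw s hs).hidden s (fun _ => x) j)
        = ∑ j ∈ Finset.range (nwW s s), aE s i.val j * max (y - cv j) 0 := by
      rw [Finset.sum_congr rfl (fun j _ => by rw [nw_hidden s hs x hx s hs le_rfl j])]
      exact Fin.sum_univ_eq_sum_range (fun j => aE s i.val j * max (y - cv j) 0) (nwW s s)
    rw [hsum, nwW_eq_three s s hs le_rfl]
    rw [Finset.sum_range_succ, Finset.sum_range_succ, Finset.sum_range_one]
    have hb : bE s s i.val = 0 := if_neg (lt_irrefl s)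
    rw [hb]
    have hsne : s ≠ 0 := by omega
    simp only [aE, cv, if_neg hsne]
    norm_num
    have hkey := key_saw hy.1 hy.2
    have hss : sawIter s x = saw y := by
      have : s = (s - 1) + 1 := by omega
      rw [this]
      rfl
    rw [hss]
    linarith [hkey]
  exact key _


lemma aE_ne (ℓ i j : ℕ) : aE ℓ i j ≠ 0 := by
  unfold aE; split_ifs <;> norm_num

open scoped Classical in
lemma nw_conn (s : ℕ) (hs : 1 ≤ s) : (nw s hs).conn = 11 * s - 3 := by
  have hconn : (nw s hs).conn
      = ∑ ℓ ∈ Finset.range (s + 1), (nwW s (ℓ+1) * nwW s ℓ + if ℓ < s then 2 else 0) := by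
    rw [ReLUNet.conn]
    apply Finset.sum_congr rfl
    intro ℓ hℓ
    congr 1
    · have hA : ∀ q ∈ (Finset.univ :
          Finset (Fin ((nw s hs).width (ℓ+1)) × Fin ((nw s hs).width ℓ))),
          (nw s hs).A ℓ q.1 q.2 ≠ 0 := fun q _ => aE_ne ℓ q.1.val q.2.val
      rw [Finset.filter_true_of_mem hA, Finset.card_univ]
      simp only [Fintype.card_prod, Fintype.card_fin]
      rfl
    · have h2 : ((Finset.univ : Finset (Fin (nwW s (ℓ+1)))).filter
          (fun i => bE s ℓ i.val ≠ 0)).card = (if ℓ < s then 2 else 0) := by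
        rw [Finset.card_filter]
        rw [Fin.sum_univ_eq_sum_range (fun n => if bE s ℓ n ≠ 0 then (1:ℕ) else 0) (nwW s (ℓ+1))]
        by_cases hℓs : ℓ < s
        · rw [if_pos hℓs, nwW_eq_three s (ℓ+1) (by omega) (by omega),
            Finset.sum_range_succ, Finset.sum_range_succ, Finset.sum_range_one]
          norm_num [bE, cv, hℓs]
        · rw [if_neg hℓs]
          simp [bE, hℓs]
      exact h2
  rw [hconn]
  obtain ⟨t, rfl⟩ : ∃ t, s = t + 1 := ⟨s - 1, by omega⟩
  rw [Finset.sum_range_succ, Finset.sum_range_succ']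
  have hmid : ∀ ℓ ∈ Finset.range t,
      (nwW (t+1) (ℓ+1+1) * nwW (t+1) (ℓ+1) + if ℓ+1 < t+1 then 2 else 0) = 11 := by
    intro ℓ hℓ
    rw [Finset.mem_range] at hℓ
    rw [nwW_eq_three _ _ (by omega) (by omega), nwW_eq_three _ _ (by omega) (by omega),
      if_pos (by omega)]
  rw [Finset.sum_congr rfl hmid, Finset.sum_const, Finset.card_range]
  have e1 : nwW (t+1) 0 = 1 := rfl
  have e2 : nwW (t+1) 1 = 3 := nwW_eq_three _ _ le_rfl (by omega)
  have e3 : nwW (t+1) (t+1) = 3 := nwW_eq_three _ _ (by omega) le_rfl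
  have e4 : nwW (t+1) (t+1+1) = 1 := by simp [nwW]
  rw [e1, e2, e3, e4, if_pos (by omega : 0 < t+1), if_neg (lt_irrefl (t+1))]
  simp only [smul_eq_mul]
  omega

/-- For every `s ≥ 1` the `s`-fold sawtooth function `g_s` is realized on
`[0,1]` by a ReLU network `Φ : ℝ → ℝ` with connectivity `11 s - 3` and depth `s + 1`. -/
theorem sawtooth_network (s : ℕ) (hs : 1 ≤ s) :
    ∃ Φ : ReLUNet 1 1, Φ.conn = 11 * s - 3 ∧ Φ.depth = s + 1 ∧
      ∀ x ∈ Set.Icc (0:ℝ) 1, Φ.eval (fun _ => x) 0 = sawIter s x := by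
  exact ⟨nw s hs, nw_conn s hs, rfl, fun x hx => nw_eval s hs x hx⟩
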